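/- Overlap bound from phase-invariant distance: Let U, V ∈ U(d) and let 0 ≤ ε ≤ √2. If D(U,V) ≤ ε, then |tr(U·Vᴴ)|² ≥ d²·(1−ε²), where Vᴴ denotes the conjugate transpose of V. -/

import Mathlib

open MeasureTheory
open scoped ENNReal Matrix InnerProductSpace

namespace Paper

noncomputable section

instance matMS (d : ℕ) : MeasurableSpace (Matrix (Fin d) (Fin d) ℂ) := borel _
instance matBS (d : ℕ) : BorelSpace (Matrix (Fin d) (Fin d) ℂ) := ⟨rfl⟩

/-- The unitary group `U(d)`. -/
abbrev UG (d : ℕ) := Matrix.unitaryGroup (Fin d) ℂ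

/-- ℓ²→ℓ² operator norm (spectral norm) of a matrix. -/
def opNorm {d : ℕ} (A : Matrix (Fin d) (Fin d) ℂ) : ℝ :=
  ‖Matrix.toEuclideanCLM (𝕜 := ℂ) A‖

/-- Phase-invariant distance on unitary channels. -/
def D {d : ℕ} (U V : UG d) : ℝ :=
  ⨅ z : {z : ℂ // ‖z‖ = 1},
    opNorm ((U : Matrix (Fin d) (Fin d) ℂ) - z.val • (V : Matrix (Fin d) (Fin d) ℂ))

/-- Closed ball of radius `r` around `V` in `U(d)` for the distance `D`. -/
def ball {d : ℕ} (V : UG d) (r : ℝ) : Set (UG d) := {U | D U V ≤ r}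

/-- Haar volume of a ball of radius `r`. -/
def Vol {d : ℕ} (μ : Measure (UG d)) (r : ℝ) : ℝ≥0∞ := μ (ball 1 r)

/-- `(α,β)`-equidistribution of `ν` at scale `ε` (relative to the Haar measure `μ`). -/
def Equidistributed {d : ℕ} (μ ν : Measure (UG d)) (α β ε : ℝ) : Prop :=
  ∀ (V : UG d) (r : ℝ), ε ≤ r →
    Vol μ (α * r) ≤ ν (ball V r) ∧ ν (ball V r) ≤ Vol μ (β * r)

/-- Products of at most `r` elements of the gate set `𝒢`. -/
def wordsLe {d : ℕ} (𝒢 : Finset (UG d)) (r : ℕ) : Set (UG d) :=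
  {W | ∃ l : List (UG d), l.length ≤ r ∧ (∀ g ∈ l, g ∈ 𝒢) ∧ l.prod = W}

/-- Convolution of two measures on a monoid: pushforward of the product measure under
multiplication. -/
def mconv {G : Type*} [Monoid G] [MeasurableSpace G] (ν ϑ : Measure G) : Measure G :=
  (ν.prod ϑ).map (fun p => p.1 * p.2)

/-- `t`-fold convolution power of a measure. -/
def convPow {G : Type*} [Monoid G] [MeasurableSpace G] (ν : Measure G) : ℕ → Measure G
  | 0 => Measure.dirac 1
  | n + 1 => mconv (convPow ν n) ν

/-- The random walk `U_t = V_t ⋯ V_1`. -/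
def walk {d : ℕ} {Ω : Type*} (V : ℕ → Ω → UG d) (t : ℕ) (ω : Ω) : UG d :=
  ((List.range t).map (fun i => V (t - i) ω)).prod

/-- Euclidean space `ℂ^d`. -/
abbrev EV (d : ℕ) := EuclideanSpace ℂ (Fin d)

instance evMS (d : ℕ) : MeasurableSpace (EV d) := borel _
instance evBS (d : ℕ) : BorelSpace (EV d) := ⟨rfl⟩

/-- Distance on pure states. -/
def dS {d : ℕ} (ψ φ : EV d) : ℝ := Real.sqrt (1 - ‖⟪ψ, φ⟫_ℂ‖ ^ 2)

/-- Ball of radius `r` around the state `φ`, inside the set of unit vectors. -/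
def ballS {d : ℕ} (φ : EV d) (r : ℝ) : Set (EV d) := {ψ | ‖ψ‖ = 1 ∧ dS ψ φ ≤ r}

/-- Action of a unitary matrix on a vector. -/
def act {d : ℕ} (U : UG d) (ψ : EV d) : EV d :=
  Matrix.toEuclideanLin (U : Matrix (Fin d) (Fin d) ℂ) ψ

/-- Topological support of a measure. -/
def msupport {X : Type*} [TopologicalSpace X] [MeasurableSpace X] (ν : Measure X) : Set X :=
  {x | ∀ U : Set X, IsOpen U → x ∈ U → ν U ≠ 0}

/-- Packing number (as an extended nonnegative real): supremum of cardinalities of finite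
subsets of `Y` whose elements are pairwise at `dist`-distance at least `ε`. -/
def Npack {X : Type*} (dist : X → X → ℝ) (Y : Set X) (ε : ℝ) : ℝ≥0∞ :=
  ⨆ (S : Finset X) (_ : ↑S ⊆ Y ∧ (S : Set X).Pairwise fun x y => ε ≤ dist x y),
    (S.card : ℝ≥0∞)

end
end Paper

namespace Paper
open ProbabilityTheory


open scoped ComplexConjugate in
private lemma aux_colsum {d : ℕ} (A : Matrix (Fin d) (Fin d) ℂ) (i : Fin d) :
    ∑ j, ‖A j i‖ ^ 2 ≤ opNorm A ^ 2 := by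
  have h1 : ‖Matrix.toEuclideanCLM (𝕜 := ℂ) A (EuclideanSpace.single i 1)‖ ≤ opNorm A := by
    have h := (Matrix.toEuclideanCLM (𝕜 := ℂ) A).le_opNorm (EuclideanSpace.single i 1)
    rwa [EuclideanSpace.norm_single, norm_one, mul_one] at h
  have h2 : ‖Matrix.toEuclideanCLM (𝕜 := ℂ) A (EuclideanSpace.single i 1)‖ ^ 2
      = ∑ j, ‖A j i‖ ^ 2 := by
    rw [EuclideanSpace.norm_eq, Real.sq_sqrt (by positivity)]
    congr 1
    ext j
    congr 2
    show (Matrix.toEuclideanCLM (𝕜 := ℂ) A ((WithLp.equiv _ _).symm (Pi.single i (1:ℂ)))) j = A j i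
    change (WithLp.toLp 2 (A *ᵥ Pi.single i (1:ℂ))) j = A j i
    simp [Matrix.mulVec_single]
  calc ∑ j, ‖A j i‖ ^ 2 = _ := h2.symm
    _ ≤ _ := by
        have := norm_nonneg (Matrix.toEuclideanCLM (𝕜 := ℂ) A (EuclideanSpace.single i 1))
        nlinarith

private lemma aux_trace_re {d : ℕ} (A : Matrix (Fin d) (Fin d) ℂ) :
    (Matrix.trace (Aᴴ * A)).re = ∑ i, ∑ j, ‖A j i‖ ^ 2 := by
  simp only [Matrix.trace, Matrix.diag, Matrix.mul_apply, Matrix.conjTranspose_apply]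
  rw [Complex.re_sum]
  congr 1; ext i
  rw [Complex.re_sum]
  congr 1; ext j
  rw [RCLike.star_def, Complex.conj_mul']; norm_cast

open scoped ComplexConjugate in
private lemma aux_key {d : ℕ} (U V : UG d) (z : ℂ) (hz : ‖z‖ = 1) :
    2 * (d : ℝ) - 2 * ‖Matrix.trace ((U : Matrix (Fin d) (Fin d) ℂ) *
        (V : Matrix (Fin d) (Fin d) ℂ)ᴴ)‖
      ≤ d * opNorm ((U : Matrix (Fin d) (Fin d) ℂ) - z • (V : Matrix (Fin d) (Fin d) ℂ)) ^ 2 := by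
  set A : Matrix (Fin d) (Fin d) ℂ :=
    (U : Matrix (Fin d) (Fin d) ℂ) - z • (V : Matrix (Fin d) (Fin d) ℂ) with hAdef
  have hU : (U : Matrix (Fin d) (Fin d) ℂ)ᴴ * (U : Matrix (Fin d) (Fin d) ℂ) = 1 := by
    simpa [Matrix.star_eq_conjTranspose] using U.2.1
  have hV : (V : Matrix (Fin d) (Fin d) ℂ)ᴴ * (V : Matrix (Fin d) (Fin d) ℂ) = 1 := by
    simpa [Matrix.star_eq_conjTranspose] using V.2.1
  have hz1 : star z * z = 1 := by
    rw [RCLike.star_def, Complex.conj_mul']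
    norm_cast
    rw [hz, one_pow]
  have hA : Aᴴ * A = (1 : Matrix (Fin d) (Fin d) ℂ) + 1 -
      (z • ((U : Matrix (Fin d) (Fin d) ℂ)ᴴ * (V : Matrix (Fin d) (Fin d) ℂ)) +
        star z • ((V : Matrix (Fin d) (Fin d) ℂ)ᴴ * (U : Matrix (Fin d) (Fin d) ℂ))) := by
    have e1 : Aᴴ * A = ((U : Matrix (Fin d) (Fin d) ℂ)ᴴ * (U : Matrix (Fin d) (Fin d) ℂ)
          - z • ((U : Matrix (Fin d) (Fin d) ℂ)ᴴ * (V : Matrix (Fin d) (Fin d) ℂ)))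
        - (star z • ((V : Matrix (Fin d) (Fin d) ℂ)ᴴ * (U : Matrix (Fin d) (Fin d) ℂ))
          - (z * star z) • ((V : Matrix (Fin d) (Fin d) ℂ)ᴴ * (V : Matrix (Fin d) (Fin d) ℂ))) := by
      rw [hAdef, Matrix.conjTranspose_sub, Matrix.conjTranspose_smul, Matrix.sub_mul,
        Matrix.mul_sub, Matrix.mul_sub, Matrix.smul_mul, Matrix.mul_smul,
        Matrix.mul_smul, Matrix.smul_mul, smul_smul]
    have hz1' : z * star z = 1 := by rw [mul_comm]; exact hz1
    rw [e1, hU, hV, hz1', one_smul]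
    abel
  set t : ℂ := Matrix.trace ((V : Matrix (Fin d) (Fin d) ℂ)ᴴ * (U : Matrix (Fin d) (Fin d) ℂ))
    with htdef
  have hconj : Matrix.trace ((U : Matrix (Fin d) (Fin d) ℂ)ᴴ * (V : Matrix (Fin d) (Fin d) ℂ))
      = starRingEnd ℂ t := by
    show _ = star t
    rw [htdef, ← Matrix.trace_conjTranspose, Matrix.conjTranspose_mul,
      Matrix.conjTranspose_conjTranspose]
  have htr : (Matrix.trace (Aᴴ * A)).re = 2 * d - 2 * (conj z * t).re := by
    rw [hA]
    rw [Matrix.trace_sub, Matrix.trace_add, Matrix.trace_add, Matrix.trace_smul,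
      Matrix.trace_smul, Matrix.trace_one, hconj]
    have h1 : z • starRingEnd ℂ t = starRingEnd ℂ (conj z * t) := by
      rw [smul_eq_mul, map_mul, Complex.conj_conj]
    rw [h1]
    simp only [RCLike.star_def, smul_eq_mul, Complex.sub_re, Complex.add_re, Complex.conj_re,
      Complex.natCast_re, Fintype.card_fin]
    ring
  have hre : (conj z * t).re ≤ ‖Matrix.trace ((U : Matrix (Fin d) (Fin d) ℂ) *
      (V : Matrix (Fin d) (Fin d) ℂ)ᴴ)‖ := by
    have h2 : Matrix.trace ((U : Matrix (Fin d) (Fin d) ℂ) * (V : Matrix (Fin d) (Fin d) ℂ)ᴴ)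
        = t := Matrix.trace_mul_comm _ _
    calc (conj z * t).re ≤ ‖conj z * t‖ := Complex.re_le_norm _
      _ = ‖conj z‖ * ‖t‖ := by rw [norm_mul]
      _ = ‖t‖ := by rw [RCLike.norm_conj, hz, one_mul]
      _ = _ := by rw [h2]
  have hfrob : (Matrix.trace (Aᴴ * A)).re ≤ d * opNorm A ^ 2 := by
    rw [aux_trace_re]
    calc ∑ i, ∑ j, ‖A j i‖ ^ 2 ≤ ∑ _i : Fin d, opNorm A ^ 2 :=
          Finset.sum_le_sum fun i _ => aux_colsum A i
      _ = d * opNorm A ^ 2 := by simp [mul_comm]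
  have := htr ▸ hfrob
  linarith

theorem stmt1 {d : ℕ} (hd : 2 ≤ d) (U V : UG d) {ε : ℝ}
    (hε0 : 0 ≤ ε) (hε2 : ε ≤ Real.sqrt 2) (h : D U V ≤ ε) :
    (d : ℝ) ^ 2 * (1 - ε ^ 2) ≤
      ‖Matrix.trace ((U : Matrix (Fin d) (Fin d) ℂ) * (V : Matrix (Fin d) (Fin d) ℂ)ᴴ)‖ ^ 2 := by
  set T : ℝ := ‖Matrix.trace ((U : Matrix (Fin d) (Fin d) ℂ) *
      (V : Matrix (Fin d) (Fin d) ℂ)ᴴ)‖ with hTdef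
  have hT0 : 0 ≤ T := norm_nonneg _
  have hd0 : (0:ℝ) < d := by positivity
  have hε2' : ε ^ 2 ≤ 2 := by
    have := Real.sq_sqrt (by norm_num : (0:ℝ) ≤ 2)
    nlinarith [Real.sqrt_nonneg 2]
  have hmain : (d : ℝ) * (2 - ε ^ 2) ≤ 2 * T := by
    by_contra hcon
    push_neg at hcon
    set s : ℝ := (2 * d - 2 * T) / d with hsdef
    have hs : ε ^ 2 < s := by
      rw [hsdef, lt_div_iff₀ hd0]
      nlinarith
    have hs0 : 0 ≤ s := le_of_lt (lt_of_le_of_lt (by positivity) hs)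
    have hDs : Real.sqrt s ≤ D U V := by
      haveI : Nonempty {z : ℂ // ‖z‖ = 1} := ⟨⟨1, by simp⟩⟩
      apply le_ciInf
      intro zz
      obtain ⟨z, hz⟩ := zz
      have hk := aux_key U V z hz
      have hop : s ≤ opNorm ((U : Matrix (Fin d) (Fin d) ℂ) -
          z • (V : Matrix (Fin d) (Fin d) ℂ)) ^ 2 := by
        rw [hsdef, div_le_iff₀ hd0]
        nlinarith
      have h0 : (0:ℝ) ≤ opNorm ((U : Matrix (Fin d) (Fin d) ℂ) -
          z • (V : Matrix (Fin d) (Fin d) ℂ)) := norm_nonneg _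
      have h3 := Real.sqrt_le_sqrt hop
      rwa [Real.sqrt_sq h0] at h3
    have hεs : ε < Real.sqrt s := by
      rw [show ε = Real.sqrt (ε ^ 2) by rw [Real.sqrt_sq hε0]]
      exact Real.sqrt_lt_sqrt (by positivity) hs
    linarith
  have h1 : 0 ≤ (d : ℝ) * (2 - ε ^ 2) := by nlinarith
  have h2 := mul_self_le_mul_self h1 hmain
  nlinarith [sq_nonneg ((d : ℝ) * ε ^ 2)]

end Paper
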